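/- Let (σ,τ,h) be a semifull algebra contraction of (A,d_A) onto (B,d_B). Then for every n ≥ 2 and all x_1,…,x_n ∈ B, the cumulants of τ satisfy κ(τ)_n(x_1,…,x_n) = Σ h( K(d_A)_k( κ(τ)_{|I_1|}((x_i)_{i∈I_1}), …, κ(τ)_{|I_k|}((x_i)_{i∈I_k}) ) ), the sum running over all partitions {I_1,…,I_k} of {1,…,n} into k ≥ 2 nonempty blocks. (Hence κ(τ) is the L∞ morphism obtained by homotopy transfer from the L∞ structure given by the Koszul brackets of d_A.) -/

import Mathlib

open Finset

/-- The `n`-th Koszul bracket of an operator `D` on a commutative ring. -/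
noncomputable def koszul {R : Type*} [CommRing R] (D : R → R) (n : ℕ) (a : Fin n → R) : R :=
  ∑ s ∈ (Finset.univ : Finset (Fin n)).powerset.filter fun s => s.Nonempty,
    (-1 : ℤ) ^ (n - s.card) • (D (∏ i ∈ s, a i) * ∏ i ∈ sᶜ, a i)

/-- The set of partitions of `{0,…,n-1}` into nonempty, pairwise disjoint blocks. -/
def partitionsOf (n : ℕ) : Finset (Finset (Finset (Fin n))) :=
  ((Finset.univ : Finset (Fin n)).powerset.powerset).filter fun P =>
    (∀ s ∈ P, s.Nonempty) ∧ (∀ s ∈ P, ∀ t ∈ P, s ≠ t → s ∩ t = ∅) ∧ P.sup id = Finset.univ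

/-- The `n`-th cumulant of a map `f` between commutative rings. -/
noncomputable def cumul {R S : Type*} [CommRing R] [CommRing S]
    (f : R → S) (n : ℕ) (a : Fin n → R) : S :=
  ∑ P ∈ partitionsOf n,
    ((-1 : ℤ) ^ (P.card - 1) * ((P.card - 1).factorial : ℤ)) • ∏ s ∈ P, f (∏ i ∈ s, a i)

/-- Restriction of a family `a` to a finite subset `s` of its index set. -/
noncomputable def restr {α β : Type*} (a : α → β) (s : Finset α) : Fin s.card → β :=
  fun i => a (s.equivFin.symm i).1


section PartsCombinatorics
variable {α : Type*} [DecidableEq α]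



/-- partitions of a finset `V` into nonempty pairwise disjoint blocks -/
def parts (V : Finset α) : Finset (Finset (Finset α)) :=
  (V.powerset.powerset).filter fun P =>
    (∀ s ∈ P, s.Nonempty) ∧ (∀ s ∈ P, ∀ t ∈ P, s ≠ t → s ∩ t = ∅) ∧ P.sup id = V

lemma mem_parts {V : Finset α} {P : Finset (Finset α)} :
    P ∈ parts V ↔ (∀ s ∈ P, s.Nonempty) ∧
      (∀ s ∈ P, ∀ t ∈ P, s ≠ t → s ∩ t = ∅) ∧ P.sup id = V := by
  simp only [parts, mem_filter, mem_powerset, and_iff_right_iff_imp]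
  rintro ⟨h1, h2, h3⟩ s hs
  simp only [mem_powerset]
  have : (id s : Finset α) ≤ P.sup id := le_sup hs
  simpa [h3] using this

lemma block_subset {V : Finset α} {P : Finset (Finset α)} (hP : P ∈ parts V)
    {s : Finset α} (hs : s ∈ P) : s ⊆ V := by
  have := (mem_parts.1 hP).2.2
  have : (id s : Finset α) ≤ P.sup id := le_sup hs
  simpa [(mem_parts.1 hP).2.2] using this

lemma exists_block {V : Finset α} {P : Finset (Finset α)} (hP : P ∈ parts V)
    {e : α} (he : e ∈ V) : ∃ s ∈ P, e ∈ s := by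
  obtain ⟨-, -, h3⟩ := mem_parts.1 hP
  have : e ∈ P.sup id := by rw [h3]; exact he
  simpa [Finset.mem_sup] using this

lemma block_unique {V : Finset α} {P : Finset (Finset α)} (hP : P ∈ parts V)
    {s t : Finset α} (hs : s ∈ P) (ht : t ∈ P) {e : α} (hes : e ∈ s) (het : e ∈ t) :
    s = t := by
  by_contra hne
  have := (mem_parts.1 hP).2.1 s hs t ht hne
  have : e ∈ s ∩ t := mem_inter.2 ⟨hes, het⟩
  simp_all

lemma parts_empty : parts (∅ : Finset α) = {∅} := by
  ext P
  simp only [mem_parts, mem_singleton]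
  constructor
  · rintro ⟨h1, -, h3⟩
    by_contra hne
    obtain ⟨s, hs⟩ := Finset.nonempty_of_ne_empty hne
    obtain ⟨a, ha⟩ := h1 s hs
    have : (id s : Finset α) ≤ P.sup id := le_sup hs
    rw [h3] at this
    exact absurd (this ha) (by simp)
  · rintro rfl; simp

lemma mem_parts_self {V : Finset α} (hV : V.Nonempty) : {V} ∈ parts V := by
  simp [mem_parts, hV]

lemma eq_self_of_mem_parts {V : Finset α} {P : Finset (Finset α)} (hP : P ∈ parts V)
    (hV : V ∈ P) : P = {V} := by
  ext t
  simp only [mem_singleton]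
  constructor
  · intro ht
    obtain ⟨a, ha⟩ := (mem_parts.1 hP).1 t ht
    exact (block_unique hP hV ht (block_subset hP ht ha) ha).symm
  · rintro rfl; exact hV

lemma card_one_of_mem_parts {V : Finset α} {P : Finset (Finset α)} (hP : P ∈ parts V)
    (hV : V.Nonempty) (h1 : P.card ≤ 1) : P = {V} := by
  obtain ⟨e, he⟩ := hV
  obtain ⟨s, hs, hes⟩ := exists_block hP he
  have hcard : P = {s} := by
    have hne : P.Nonempty := ⟨s, hs⟩
    obtain ⟨a, rfl⟩ := Finset.card_eq_one.1 (le_antisymm h1 (Finset.card_pos.2 hne))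
    simp_all
  subst hcard
  have h3 := (mem_parts.1 hP).2.2
  simp only [Finset.sup_singleton, id_eq] at h3
  rw [h3]

lemma parts_singleton (e : α) : parts ({e} : Finset α) = {{{e}}} := by
  ext P
  simp only [mem_parts, mem_singleton]
  constructor
  · rintro ⟨h1, h2, h3⟩
    have hb : ∀ s ∈ P, s = {e} := by
      intro s hs
      have hsub : s ⊆ {e} := by
        have : (id s : Finset α) ≤ P.sup id := le_sup hs
        simpa [h3] using this
      obtain ⟨a, ha⟩ := h1 s hs
      have := hsub ha
      simp only [mem_singleton] at this
      subst this
      exact le_antisymm hsub (by simpa using ha)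
    have hPne : P.Nonempty := by
      by_contra hne
      rw [not_nonempty_iff_eq_empty] at hne
      subst hne
      simp at h3
    ext t
    simp only [mem_singleton]
    constructor
    · exact hb t
    · rintro rfl
      obtain ⟨s, hs⟩ := hPne
      rwa [hb s hs] at hs
  · rintro rfl; simp

-- new material

lemma parts_erase {V : Finset α} {P : Finset (Finset α)} (hP : P ∈ parts V)
    {G : Finset α} (hG : G ∈ P) : P.erase G ∈ parts (V \ G) := by
  obtain ⟨h1, h2, h3⟩ := mem_parts.1 hP
  refine mem_parts.2 ⟨fun s hs => h1 s (mem_of_mem_erase hs),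
    fun s hs t ht => h2 s (mem_of_mem_erase hs) t (mem_of_mem_erase ht), ?_⟩
  ext a
  simp only [Finset.mem_sup, id_eq, mem_sdiff, mem_erase]
  constructor
  · rintro ⟨s, ⟨hsne, hsP⟩, has⟩
    refine ⟨block_subset hP hsP has, fun haG => ?_⟩
    exact hsne (block_unique hP hsP hG has haG)
  · rintro ⟨haV, haG⟩
    obtain ⟨s, hsP, has⟩ := exists_block hP haV
    exact ⟨s, ⟨fun hsG => haG (hsG ▸ has), hsP⟩, has⟩

lemma parts_insert {V G : Finset α} (hGV : G ⊆ V) (hGne : G.Nonempty)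
    {R : Finset (Finset α)} (hR : R ∈ parts (V \ G)) :
    insert G R ∈ parts V ∧ G ∉ R := by
  obtain ⟨h1, h2, h3⟩ := mem_parts.1 hR
  have hGR : G ∉ R := by
    intro hGR
    have : G ⊆ V \ G := block_subset hR hGR
    obtain ⟨a, ha⟩ := hGne
    exact absurd (this ha) (by simp [ha])
  have hdisj : ∀ t ∈ R, G ∩ t = ∅ := by
    intro t ht
    have : t ⊆ V \ G := block_subset hR ht
    ext a; simp only [mem_inter, Finset.notMem_empty, iff_false, not_and]
    intro haG hat
    exact absurd (this hat) (by simp [haG])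
  refine ⟨mem_parts.2 ⟨?_, ?_, ?_⟩, hGR⟩
  · intro s hs
    rcases mem_insert.1 hs with rfl | hs
    · exact hGne
    · exact h1 s hs
  · intro s hs t ht hne
    rcases mem_insert.1 hs with hs' | hs' <;> rcases mem_insert.1 ht with ht' | ht'
    · exact absurd (hs'.trans ht'.symm) hne
    · subst hs'; exact hdisj t ht'
    · subst ht'; rw [inter_comm]; exact hdisj s hs'
    · exact h2 s hs' t ht' hne
  · rw [Finset.sup_insert, h3]
    simpa using union_sdiff_of_subset hGV

/-- The block of `P` containing `e`. -/
def blockAt (e : α) (P : Finset (Finset α)) : Finset α :=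
  (P.filter (fun s => e ∈ s)).sup id

lemma blockAt_spec {V : Finset α} {P : Finset (Finset α)} (hP : P ∈ parts V)
    {e : α} (he : e ∈ V) : blockAt e P ∈ P ∧ e ∈ blockAt e P := by
  obtain ⟨G, hG, heG⟩ := exists_block hP he
  have hfil : P.filter (fun s => e ∈ s) = {G} := by
    ext s
    simp only [mem_filter, mem_singleton]
    constructor
    · rintro ⟨hsP, hes⟩; exact block_unique hP hsP hG hes heG
    · rintro rfl; exact ⟨hG, heG⟩
  rw [blockAt, hfil]
  simpa using ⟨hG, heG⟩

lemma blockAt_eq {V : Finset α} {P : Finset (Finset α)} (hP : P ∈ parts V)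
    {e : α} (he : e ∈ V) {s : Finset α} (hs : s ∈ P) (hes : e ∈ s) :
    blockAt e P = s :=
  block_unique hP (blockAt_spec hP he).1 hs (blockAt_spec hP he).2 hes

/-- Splitting a sum over partitions of `V` according to the block containing `e`. -/
lemma sum_parts_split {M : Type*} [AddCommMonoid M] {V : Finset α} {e : α} (he : e ∈ V)
    (F : Finset (Finset α) → M) :
    ∑ P ∈ parts V, F P =
      ∑ G ∈ V.powerset.filter (fun G => e ∈ G), ∑ R ∈ parts (V \ G), F (insert G R) := by
  rw [Finset.sum_sigma' (V.powerset.filter (fun G => e ∈ G)) (fun G => parts (V \ G))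
    (fun G R => F (insert G R))]
  refine Finset.sum_nbij' (fun P => ⟨blockAt e P, P.erase (blockAt e P)⟩)
    (fun q => insert q.1 q.2) ?_ ?_ ?_ ?_ ?_
  · intro P hP
    obtain ⟨hmem, hemem⟩ := blockAt_spec hP he
    exact Finset.mem_sigma.2 ⟨by simp [mem_filter, mem_powerset, block_subset hP hmem, hemem],
      parts_erase hP hmem⟩
  · rintro ⟨G, R⟩ hq
    obtain ⟨hG, hR⟩ := Finset.mem_sigma.1 hq
    simp only [mem_filter, mem_powerset] at hG
    exact (parts_insert hG.1 ⟨e, hG.2⟩ hR).1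
  · intro P hP
    obtain ⟨hmem, _⟩ := blockAt_spec hP he
    simp [Finset.insert_erase hmem]
  · rintro ⟨G, R⟩ hq
    obtain ⟨hG, hR⟩ := Finset.mem_sigma.1 hq
    simp only [mem_filter, mem_powerset] at hG
    obtain ⟨hins, hGR⟩ := parts_insert hG.1 ⟨e, hG.2⟩ hR
    have hb : blockAt e (insert G R) = G :=
      blockAt_eq hins he (mem_insert_self _ _) hG.2
    show (⟨blockAt e (insert G R), (insert G R).erase (blockAt e (insert G R))⟩ :
      (_ : Finset α) × Finset (Finset α)) = ⟨G, R⟩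
    rw [hb, Finset.erase_insert hGR]
  · intro P hP
    obtain ⟨hmem, _⟩ := blockAt_spec hP he
    simp [Finset.insert_erase hmem]

variable {β : Type*} [DecidableEq β]

lemma sup_image_finset (P : Finset (Finset α)) (φ : α → β) :
    (P.image (fun s => s.image φ)).sup id = (P.sup id).image φ := by
  ext b
  simp only [Finset.mem_sup, mem_image, id_eq]
  constructor
  · rintro ⟨s', ⟨s, hs, rfl⟩, hb⟩
    obtain ⟨a, ha, rfl⟩ := mem_image.1 hb
    exact ⟨a, ⟨s, hs, ha⟩, rfl⟩
  · rintro ⟨a, ha, rfl⟩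
    obtain ⟨s, hs, has⟩ := ha
    exact ⟨s.image φ, ⟨s, hs, rfl⟩, mem_image_of_mem φ has⟩

lemma parts_image {φ : α → β} (hφ : Function.Injective φ) (V : Finset α) :
    parts (V.image φ) = (parts V).image (fun P => P.image (fun s => s.image φ)) := by
  classical
  ext P'
  simp only [mem_image]
  constructor
  · intro hP'
    obtain ⟨h1, h2, h3⟩ := mem_parts.1 hP'
    have hsubrange : ∀ s' ∈ P', ∀ b ∈ s', b ∈ Set.range φ := by
      intro s' hs' b hb
      have : s' ⊆ V.image φ := by
        have : (id s' : Finset β) ≤ P'.sup id := le_sup hs'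
        simpa [h3] using this
      obtain ⟨a, _, rfl⟩ := mem_image.1 (this hb)
      exact ⟨a, rfl⟩
    refine ⟨P'.image (fun s' => s'.preimage φ hφ.injOn), ?_, ?_⟩
    · refine mem_parts.2 ⟨?_, ?_, ?_⟩
      · rintro s hs
        obtain ⟨s', hs', rfl⟩ := mem_image.1 hs
        obtain ⟨b, hb⟩ := h1 s' hs'
        obtain ⟨a, rfl⟩ := hsubrange s' hs' b hb
        exact ⟨a, Finset.mem_preimage.2 hb⟩
      · rintro s hs t ht hne
        obtain ⟨s', hs', rfl⟩ := mem_image.1 hs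
        obtain ⟨t', ht', rfl⟩ := mem_image.1 ht
        have hne' : s' ≠ t' := fun hh => hne (by rw [hh])
        ext a
        simp only [mem_inter, Finset.mem_preimage, Finset.notMem_empty, iff_false, not_and]
        intro ha1 ha2
        have := h2 s' hs' t' ht' hne'
        have : φ a ∈ s' ∩ t' := mem_inter.2 ⟨ha1, ha2⟩
        simp_all
      · ext a
        simp only [Finset.mem_sup, mem_image, id_eq]
        constructor
        · rintro ⟨s, ⟨s', hs', rfl⟩, ha⟩
          have : φ a ∈ P'.sup id := by
            simp only [Finset.mem_sup, id_eq]
            exact ⟨s', hs', Finset.mem_preimage.1 ha⟩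
          rw [h3] at this
          obtain ⟨a', ha', heq⟩ := mem_image.1 this
          rwa [← hφ heq]
        · intro ha
          have : φ a ∈ P'.sup id := by rw [h3]; exact mem_image_of_mem φ ha
          simp only [Finset.mem_sup, id_eq] at this
          obtain ⟨s', hs', hmem⟩ := this
          exact ⟨s'.preimage φ hφ.injOn, ⟨s', hs', rfl⟩, Finset.mem_preimage.2 hmem⟩
    · rw [Finset.image_image]
      have : ∀ s' ∈ P', ((fun s => s.image φ) ∘ fun s' => s'.preimage φ hφ.injOn) s' = s' := by
        intro s' hs'
        simp only [Function.comp_apply]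
        rw [Finset.image_preimage]
        exact Finset.filter_true_of_mem (hsubrange s' hs')
      calc P'.image _ = P'.image id := Finset.image_congr (fun s' hs' => this s' hs')
        _ = P' := Finset.image_id
  · rintro ⟨P, hP, rfl⟩
    obtain ⟨h1, h2, h3⟩ := mem_parts.1 hP
    refine mem_parts.2 ⟨?_, ?_, ?_⟩
    · rintro s' hs'
      obtain ⟨s, hs, rfl⟩ := mem_image.1 hs'
      exact (h1 s hs).image φ
    · rintro s' hs' t' ht' hne
      obtain ⟨s, hs, rfl⟩ := mem_image.1 hs'
      obtain ⟨t, ht, rfl⟩ := mem_image.1 ht'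
      have hne' : s ≠ t := fun hh => hne (by rw [hh])
      rw [← Finset.image_inter _ _ hφ, h2 s hs t ht hne', Finset.image_empty]
    · rw [sup_image_finset, h3]

lemma sum_parts_image {M : Type*} [AddCommMonoid M] {φ : α → β} (hφ : Function.Injective φ)
    (V : Finset α) (F : Finset (Finset β) → M) :
    ∑ P' ∈ parts (V.image φ), F P' =
      ∑ P ∈ parts V, F (P.image (fun s => s.image φ)) := by
  classical
  rw [parts_image hφ]
  exact Finset.sum_image (fun P _ Q _ hPQ =>
    Finset.image_injective (Finset.image_injective hφ) hPQ)

lemma powerset_ne_image {φ : α → β} (hφ : Function.Injective φ) (V : Finset α) :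
    (V.image φ).powerset.filter (fun s => s.Nonempty) =
      (V.powerset.filter (fun s => s.Nonempty)).image (fun s => s.image φ) := by
  classical
  ext s'
  simp only [mem_filter, mem_powerset, mem_image]
  constructor
  · rintro ⟨hsub, hne⟩
    refine ⟨s'.preimage φ hφ.injOn, ⟨?_, ?_⟩, ?_⟩
    · intro a ha
      have := hsub (Finset.mem_preimage.1 ha)
      obtain ⟨a', ha', heq⟩ := mem_image.1 this
      rwa [← hφ heq]
    · obtain ⟨b, hb⟩ := hne
      obtain ⟨a, _, rfl⟩ := mem_image.1 (hsub hb)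
      exact ⟨a, Finset.mem_preimage.2 hb⟩
    · rw [Finset.image_preimage]
      refine Finset.filter_true_of_mem ?_
      intro b hb
      obtain ⟨a, _, rfl⟩ := mem_image.1 (hsub hb)
      exact ⟨a, rfl⟩
  · rintro ⟨s, ⟨hsub, hne⟩, rfl⟩
    exact ⟨Finset.image_subset_image hsub, hne.image φ⟩

lemma sum_powerset_ne_image {M : Type*} [AddCommMonoid M] {φ : α → β}
    (hφ : Function.Injective φ) (V : Finset α) (F : Finset β → M) :
    ∑ s' ∈ (V.image φ).powerset.filter (fun s => s.Nonempty), F s' =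
      ∑ s ∈ V.powerset.filter (fun s => s.Nonempty), F (s.image φ) := by
  rw [powerset_ne_image hφ]
  exact Finset.sum_image (fun s _ t _ hst => Finset.image_injective hφ hst)

lemma univ_image_equivFin {γ : Type*} [DecidableEq γ] (s : Finset γ) :
    (Finset.univ : Finset (Fin s.card)).image (fun i => (s.equivFin.symm i).1) = s := by
  ext a
  simp only [mem_image, mem_univ, true_and]
  constructor
  · rintro ⟨i, rfl⟩
    exact (s.equivFin.symm i).2
  · intro ha
    exact ⟨s.equivFin ⟨a, ha⟩, by simp⟩

-- A sub-collection of a partition is a partition of its union.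
lemma subcoll_parts {V : Finset α} {P : Finset (Finset α)} (hP : P ∈ parts V)
    {S : Finset (Finset α)} (hS : S ⊆ P) : S ∈ parts (S.sup id) := by
  obtain ⟨h1, h2, _⟩ := mem_parts.1 hP
  exact mem_parts.2 ⟨fun s hs => h1 s (hS hs), fun s hs t ht => h2 s (hS hs) t (hS ht), rfl⟩

lemma sdiff_coll_parts {V : Finset α} {P : Finset (Finset α)} (hP : P ∈ parts V)
    {S : Finset (Finset α)} (hS : S ⊆ P) : P \ S ∈ parts (V \ S.sup id) := by
  obtain ⟨h1, h2, h3⟩ := mem_parts.1 hP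
  refine mem_parts.2 ⟨fun s hs => h1 s (mem_sdiff.1 hs).1,
    fun s hs t ht => h2 s (mem_sdiff.1 hs).1 t (mem_sdiff.1 ht).1, ?_⟩
  ext a
  simp only [Finset.mem_sup, id_eq, mem_sdiff]
  constructor
  · rintro ⟨t, ⟨htP, htS⟩, hat⟩
    refine ⟨block_subset hP htP hat, ?_⟩
    rintro ⟨s, hsS, has⟩
    exact htS (block_unique hP htP (hS hsS) hat has ▸ hsS)
  · rintro ⟨haV, haS⟩
    obtain ⟨t, htP, hat⟩ := exists_block hP haV
    exact ⟨t, ⟨htP, fun htS => haS ⟨t, htS, hat⟩⟩, hat⟩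

lemma union_parts {V₀ V : Finset α} (hV : V ⊆ V₀) {S R : Finset (Finset α)}
    (hS : S ∈ parts V) (hR : R ∈ parts (V₀ \ V)) :
    S ∪ R ∈ parts V₀ ∧ Disjoint S R := by
  obtain ⟨hS1, hS2, hS3⟩ := mem_parts.1 hS
  obtain ⟨hR1, hR2, hR3⟩ := mem_parts.1 hR
  have hcross : ∀ s ∈ S, ∀ t ∈ R, s ∩ t = ∅ := by
    intro s hs t ht
    ext a
    simp only [mem_inter, Finset.notMem_empty, iff_false, not_and]
    intro has hat
    have h1 : a ∈ V := block_subset hS hs has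
    have h2 : a ∈ V₀ \ V := block_subset hR ht hat
    simp_all
  have hdisj : Disjoint S R := by
    rw [Finset.disjoint_left]
    intro s hsS hsR
    obtain ⟨a, ha⟩ := hS1 s hsS
    have := hcross s hsS s hsR
    have : a ∈ s ∩ s := mem_inter.2 ⟨ha, ha⟩
    simp_all
  refine ⟨mem_parts.2 ⟨?_, ?_, ?_⟩, hdisj⟩
  · intro s hs
    rcases mem_union.1 hs with hs | hs
    · exact hS1 s hs
    · exact hR1 s hs
  · intro s hs t ht hne
    rcases mem_union.1 hs with hs | hs <;> rcases mem_union.1 ht with ht | ht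
    · exact hS2 s hs t ht hne
    · exact hcross s hs t ht
    · rw [inter_comm]; exact hcross t ht s hs
    · exact hR2 s hs t ht hne
  · rw [Finset.sup_union, hS3, hR3]
    simpa using union_sdiff_of_subset hV

lemma sup_nonempty_of_parts {V : Finset α} {S : Finset (Finset α)} (hS : S ∈ parts V)
    (hne : S.Nonempty) : V.Nonempty := by
  obtain ⟨s, hs⟩ := hne
  obtain ⟨a, ha⟩ := (mem_parts.1 hS).1 s hs
  exact ⟨a, block_subset hS hs ha⟩

/-- reindex sum over (partition, nonempty subcollection) as sum over
(nonempty subset V, partition of V, partition of complement) -/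
lemma sum_parts_pair {M : Type*} [AddCommMonoid M] (V₀ : Finset α)
    (g : Finset (Finset α) → Finset (Finset α) → M) :
    (∑ P ∈ parts V₀, ∑ S ∈ P.powerset.filter (fun S => S.Nonempty), g S (P \ S)) =
      ∑ V ∈ V₀.powerset.filter (fun V => V.Nonempty), ∑ S ∈ parts V,
        ∑ R ∈ parts (V₀ \ V), g S R := by
  have hrhs : ∀ V : Finset α, (∑ S ∈ parts V, ∑ R ∈ parts (V₀ \ V), g S R) =
      ∑ q ∈ (parts V) ×ˢ (parts (V₀ \ V)), g q.1 q.2 := by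
    intro V; rw [Finset.sum_product]
  simp_rw [hrhs]
  rw [Finset.sum_sigma' (parts V₀) (fun P => P.powerset.filter (fun S => S.Nonempty))
    (fun P S => g S (P \ S)),
    Finset.sum_sigma' (V₀.powerset.filter (fun V => V.Nonempty))
    (fun V => (parts V) ×ˢ (parts (V₀ \ V))) (fun _ q => g q.1 q.2)]
  refine Finset.sum_nbij' (fun p => ⟨p.2.sup id, (p.2, p.1 \ p.2)⟩)
    (fun q => ⟨q.2.1 ∪ q.2.2, q.2.1⟩) ?_ ?_ ?_ ?_ ?_
  · rintro ⟨P, S⟩ hp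
    obtain ⟨hP, hS⟩ := Finset.mem_sigma.1 hp
    simp only [mem_filter, mem_powerset] at hS
    obtain ⟨hSP, hSne⟩ := hS
    have h1 := subcoll_parts hP hSP
    refine Finset.mem_sigma.2 ⟨?_, ?_⟩
    · simp only [mem_filter, mem_powerset]
      refine ⟨?_, sup_nonempty_of_parts h1 hSne⟩
      intro a ha
      rw [Finset.mem_sup] at ha
      obtain ⟨s, hs, has⟩ := ha
      exact block_subset hP (hSP hs) has
    · exact Finset.mem_product.2 ⟨h1, sdiff_coll_parts hP hSP⟩
  · rintro ⟨V, S, R⟩ hq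
    obtain ⟨hV, hSR⟩ := Finset.mem_sigma.1 hq
    simp only [mem_filter, mem_powerset] at hV
    obtain ⟨hS, hR⟩ := Finset.mem_product.1 hSR
    obtain ⟨hU, hdisj⟩ := union_parts hV.1 hS hR
    refine Finset.mem_sigma.2 ⟨hU, ?_⟩
    simp only [mem_filter, mem_powerset]
    refine ⟨Finset.subset_union_left, ?_⟩
    by_contra hne
    rw [not_nonempty_iff_eq_empty] at hne
    subst hne
    have := (mem_parts.1 hS).2.2
    simp at this
    exact absurd this.symm (Finset.nonempty_iff_ne_empty.1 hV.2)
  · rintro ⟨P, S⟩ hp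
    obtain ⟨hP, hS⟩ := Finset.mem_sigma.1 hp
    simp only [mem_filter, mem_powerset] at hS
    show (⟨S ∪ (P \ S), S⟩ : (_ : Finset (Finset α)) × Finset (Finset α)) = ⟨P, S⟩
    rw [union_sdiff_of_subset hS.1]
  · rintro ⟨V, S, R⟩ hq
    obtain ⟨hV, hSR⟩ := Finset.mem_sigma.1 hq
    simp only [mem_filter, mem_powerset] at hV
    obtain ⟨hS, hR⟩ := Finset.mem_product.1 hSR
    obtain ⟨hU, hdisj⟩ := union_parts hV.1 hS hR
    show (⟨S.sup id, (S, (S ∪ R) \ S)⟩ : (_ : Finset α) × _) = ⟨V, (S, R)⟩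
    rw [(mem_parts.1 hS).2.2, Finset.union_sdiff_cancel_left hdisj]
  · rintro ⟨P, S⟩ hp
    rfl

end PartsCombinatorics


-- helpers for kap_rec, in the parts-combinatorics language
section RecHelpers
variable {α : Type*} [DecidableEq α]

lemma filter_subset_self_parts {V : Finset α} {P : Finset (Finset α)} (hP : P ∈ parts V) :
    P.filter (fun s => s ⊆ V) = P :=
  Finset.filter_true_of_mem (fun s hs => block_subset hP hs)

lemma filter_subset_sdiff_parts {V : Finset α} {P : Finset (Finset α)} (hP : P ∈ parts V)
    {Bl : Finset α} (hBl : Bl ∈ P) :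
    P.filter (fun s => s ⊆ V \ Bl) = P.erase Bl := by
  ext s
  simp only [mem_filter, mem_erase]
  constructor
  · rintro ⟨hsP, hsub⟩
    refine ⟨fun hq => ?_, hsP⟩
    subst hq
    obtain ⟨a, ha⟩ := (mem_parts.1 hP).1 s hsP
    exact (mem_sdiff.1 (hsub ha)).2 ha
  · rintro ⟨hne, hsP⟩
    refine ⟨hsP, ?_⟩
    intro a has
    have haV : a ∈ V := block_subset hP hsP has
    refine mem_sdiff.2 ⟨haV, fun haBl => ?_⟩
    have := (mem_parts.1 hP).2.1 s hsP Bl hBl hne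
    have : a ∈ s ∩ Bl := mem_inter.2 ⟨has, haBl⟩
    simp_all

lemma sdiff_ne_self_of_mem {V : Finset α} {P : Finset (Finset α)} (hP : P ∈ parts V)
    {Bl : Finset α} (hBl : Bl ∈ P) : V \ Bl ≠ V := by
  obtain ⟨a, ha⟩ := (mem_parts.1 hP).1 Bl hBl
  intro hq
  have : a ∈ V := block_subset hP hBl ha
  rw [← hq] at this
  exact (mem_sdiff.1 this).2 ha

lemma top_not_mem_image {V : Finset α} {P : Finset (Finset α)} (hP : P ∈ parts V)
    {e : α} : V ∉ (P.filter (fun s => e ∉ s)).image (fun Bl => V \ Bl) := by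
  intro hmem
  obtain ⟨Bl, hBl, hq⟩ := Finset.mem_image.1 hmem
  exact sdiff_ne_self_of_mem hP (mem_filter.1 hBl).1 hq

lemma filter_not_mem_eq_erase {V : Finset α} {P : Finset (Finset α)} (hP : P ∈ parts V)
    {e : α} (he : e ∈ V) :
    P.filter (fun s => e ∉ s) = P.erase (blockAt e P) := by
  ext s
  simp only [mem_filter, mem_erase]
  constructor
  · rintro ⟨hsP, hes⟩
    exact ⟨fun hq => hes (hq ▸ (blockAt_spec hP he).2), hsP⟩
  · rintro ⟨hne, hsP⟩
    exact ⟨hsP, fun hes => hne (blockAt_eq hP he hsP hes).symm⟩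

lemma card_filter_not_mem {V : Finset α} {P : Finset (Finset α)} (hP : P ∈ parts V)
    {e : α} (he : e ∈ V) :
    (P.filter (fun s => e ∉ s)).card = P.card - 1 := by
  rw [filter_not_mem_eq_erase hP he, Finset.card_erase_of_mem (blockAt_spec hP he).1]

lemma insert_sdiff_parts {V G : Finset α} (hG : G ⊆ V) (hGV : G ≠ V)
    {Q : Finset (Finset α)} (hQ : Q ∈ parts G) :
    insert (V \ G) Q ∈ parts V ∧ (V \ G) ∉ Q := by
  have hne : (V \ G).Nonempty := by
    rw [Finset.sdiff_nonempty]
    intro hsub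
    exact hGV (subset_antisymm hG hsub)
  have hQ' : Q ∈ parts (V \ (V \ G)) := by
    rwa [Finset.sdiff_sdiff_eq_self hG]
  exact parts_insert Finset.sdiff_subset hne hQ'

end RecHelpers

section GoodSection
variable {K A B : Type*} [Field K]
    [CommRing A] [Algebra K A] [CommRing B] [Algebra K B]
    (dA : A →ₗ[K] A) (dB : B →ₗ[K] B) (σ : A →ₗ[K] B) (τ : B →ₗ[K] A) (h : A →ₗ[K] A)

/-- An element of `A` is *good* if it is killed by `h` and is of the form `τ(x) + h(b)`. -/
def IsGood (w : A) : Prop := h w = 0 ∧ ∃ b, w - τ (σ w) = h b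

variable {dA dB σ τ h}

lemma isGood_tau (hστ : ∀ x, σ (τ x) = x) (hhτ : ∀ x, h (τ x) = 0) (x : B) :
    IsGood σ τ h (τ x) :=
  ⟨hhτ x, ⟨0, by rw [hστ, sub_self, map_zero]⟩⟩

lemma isGood_h (hσh : ∀ a, σ (h a) = 0) (hhh : ∀ a, h (h a) = 0) (a : A) :
    IsGood σ τ h (h a) :=
  ⟨hhh a, ⟨a, by rw [hσh, map_zero, sub_zero]⟩⟩

lemma isGood_zero : IsGood σ τ h (0 : A) := ⟨map_zero h, ⟨0, by simp⟩⟩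

lemma isGood_add {w w' : A} (hw : IsGood σ τ h w) (hw' : IsGood σ τ h w') :
    IsGood σ τ h (w + w') := by
  obtain ⟨h1, b, hb⟩ := hw
  obtain ⟨h1', b', hb'⟩ := hw'
  refine ⟨by rw [map_add, h1, h1', add_zero], ⟨b + b', ?_⟩⟩
  rw [map_add, map_add, map_add, ← hb, ← hb']
  ring

lemma isGood_zsmul {w : A} (hw : IsGood σ τ h w) (c : ℤ) : IsGood σ τ h (c • w) := by
  obtain ⟨h1, b, hb⟩ := hw
  refine ⟨by rw [map_zsmul, h1, smul_zero], ⟨c • b, ?_⟩⟩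
  rw [map_zsmul, map_zsmul, map_zsmul, ← hb, smul_sub]

lemma isGood_sum {ι : Type*} {s : Finset ι} {f : ι → A}
    (hf : ∀ i ∈ s, IsGood σ τ h (f i)) : IsGood σ τ h (∑ i ∈ s, f i) := by
  classical
  induction s using Finset.induction with
  | empty => simpa using isGood_zero
  | insert a s hns ih =>
    rw [Finset.sum_insert hns]
    exact isGood_add (hf a (mem_insert_self a s))
      (ih (fun i hi => hf i (mem_insert_of_mem hi)))

lemma h_mul_good
    (s1 : ∀ a b : A, h (h a * h b) = 0) (s2 : ∀ (a : A) (x : B), h (h a * τ x) = 0)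
    (s3 : ∀ x y : B, h (τ x * τ y) = 0)
    {w w' : A} (hw : IsGood σ τ h w) (hw' : IsGood σ τ h w') :
    h (w * w') = 0 := by
  obtain ⟨-, b, hb⟩ := hw
  obtain ⟨-, b', hb'⟩ := hw'
  have hw2 : w = τ (σ w) + h b := by rw [← hb]; ring
  have hw2' : w' = τ (σ w') + h b' := by rw [← hb']; ring
  rw [hw2, hw2']
  have hx : h (τ (σ w) * h b') = 0 := by rw [mul_comm]; exact s2 b' (σ w)
  have : (τ (σ w) + h b) * (τ (σ w') + h b') =
      τ (σ w) * τ (σ w') + h b * τ (σ w') + τ (σ w) * h b' + h b * h b' := by ring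
  rw [this, map_add, map_add, map_add, s3, s2, hx, s1]
  ring

lemma sigma_mul_good
    (s5 : ∀ a b : A, σ (h a * h b) = 0) (s6 : ∀ (a : A) (x : B), σ (h a * τ x) = 0)
    (s7 : ∀ x y : B, σ (τ x * τ y) = x * y)
    {w w' : A} (hw : IsGood σ τ h w) (hw' : IsGood σ τ h w') :
    σ (w * w') = σ w * σ w' := by
  obtain ⟨-, b, hb⟩ := hw
  obtain ⟨-, b', hb'⟩ := hw'
  have hw2 : w = τ (σ w) + h b := by rw [← hb]; ring
  have hw2' : w' = τ (σ w') + h b' := by rw [← hb']; ring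
  conv_lhs => rw [hw2, hw2']
  have hx : σ (τ (σ w) * h b') = 0 := by rw [mul_comm]; exact s6 b' (σ w)
  have : (τ (σ w) + h b) * (τ (σ w') + h b') =
      τ (σ w) * τ (σ w') + h b * τ (σ w') + τ (σ w) * h b' + h b * h b' := by ring
  rw [this, map_add, map_add, map_add, s7, s6, hx, s5]
  ring

lemma good_mul (hστ : ∀ x, σ (τ x) = x)
    (hhtp : ∀ a, h (dA a) + dA (h a) = τ (σ a) - a) (hhτ : ∀ x, h (τ x) = 0)
    (s1 : ∀ a b : A, h (h a * h b) = 0) (s2 : ∀ (a : A) (x : B), h (h a * τ x) = 0)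
    (s3 : ∀ x y : B, h (τ x * τ y) = 0)
    {w w' : A} (hw : IsGood σ τ h w) (hw' : IsGood σ τ h w') :
    IsGood σ τ h (w * w') := by
  have hh0 : h (w * w') = 0 := h_mul_good s1 s2 s3 hw hw'
  refine ⟨hh0, ?_⟩
  set p := w * w' - τ (σ (w * w')) with hp
  have hσp : σ p = 0 := by rw [hp, map_sub, hστ, sub_self]
  have hhp : h p = 0 := by rw [hp, map_sub, hh0, hhτ, sub_self]
  have := hhtp p
  rw [hhp, map_zero, add_zero, hσp, map_zero, zero_sub] at this
  exact ⟨-dA p, by rw [map_neg, this, neg_neg]⟩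

lemma good_one (hστ : ∀ x, σ (τ x) = x)
    (hhtp : ∀ a, h (dA a) + dA (h a) = τ (σ a) - a) (hhτ : ∀ x, h (τ x) = 0)
    (hdA1 : dA 1 = 0) (hdB1 : dB 1 = 0) (hτd : ∀ x, τ (dB x) = dA (τ x))
    (s4 : h 1 = 0) (s8 : σ 1 = 1) : IsGood σ τ h (1 : A) := by
  have hτ1 : τ (1 : B) = 1 := by
    set p := (1 : A) - τ 1 with hp
    have hσp : σ p = 0 := by rw [hp, map_sub, s8, hστ, sub_self]
    have hhp : h p = 0 := by rw [hp, map_sub, s4, hhτ, sub_self]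
    have hdp : dA p = 0 := by
      rw [hp, map_sub, hdA1, ← hτd, hdB1, map_zero, sub_self]
    have := hhtp p
    rw [hhp, map_zero, add_zero, hσp, map_zero, zero_sub, hdp, map_zero] at this
    have hp0 : (1 : A) - τ 1 = 0 := by
      rw [hp] at this
      have := neg_eq_zero.2 this.symm
      rwa [neg_neg] at this
    exact (sub_eq_zero.1 hp0).symm
  exact ⟨s4, ⟨0, by rw [s8, hτ1, sub_self, map_zero]⟩⟩

lemma good_prod (hστ : ∀ x, σ (τ x) = x)
    (hhtp : ∀ a, h (dA a) + dA (h a) = τ (σ a) - a) (hhτ : ∀ x, h (τ x) = 0)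
    (hdA1 : dA 1 = 0) (hdB1 : dB 1 = 0) (hτd : ∀ x, τ (dB x) = dA (τ x))
    (s1 : ∀ a b : A, h (h a * h b) = 0) (s2 : ∀ (a : A) (x : B), h (h a * τ x) = 0)
    (s3 : ∀ x y : B, h (τ x * τ y) = 0) (s4 : h 1 = 0) (s8 : σ 1 = 1)
    {ι : Type*} {s : Finset ι} {f : ι → A} (hf : ∀ i ∈ s, IsGood σ τ h (f i)) :
    IsGood σ τ h (∏ i ∈ s, f i) := by
  classical
  induction s using Finset.induction with
  | empty => simpa using good_one hστ hhtp hhτ hdA1 hdB1 hτd s4 s8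
  | insert a s hns ih =>
    rw [Finset.prod_insert hns]
    exact good_mul hστ hhtp hhτ s1 s2 s3 (hf a (mem_insert_self a s))
      (ih (fun i hi => hf i (mem_insert_of_mem hi)))

lemma sigma_prod_good (hστ : ∀ x, σ (τ x) = x)
    (hhtp : ∀ a, h (dA a) + dA (h a) = τ (σ a) - a) (hhτ : ∀ x, h (τ x) = 0)
    (hdA1 : dA 1 = 0) (hdB1 : dB 1 = 0) (hτd : ∀ x, τ (dB x) = dA (τ x))
    (s1 : ∀ a b : A, h (h a * h b) = 0) (s2 : ∀ (a : A) (x : B), h (h a * τ x) = 0)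
    (s3 : ∀ x y : B, h (τ x * τ y) = 0) (s4 : h 1 = 0)
    (s5 : ∀ a b : A, σ (h a * h b) = 0) (s6 : ∀ (a : A) (x : B), σ (h a * τ x) = 0)
    (s7 : ∀ x y : B, σ (τ x * τ y) = x * y) (s8 : σ 1 = 1)
    {ι : Type*} {s : Finset ι} {f : ι → A} (hf : ∀ i ∈ s, IsGood σ τ h (f i)) :
    σ (∏ i ∈ s, f i) = ∏ i ∈ s, σ (f i) := by
  classical
  induction s using Finset.induction with
  | empty => simpa using s8
  | insert a s hns ih =>
    rw [Finset.prod_insert hns, Finset.prod_insert hns,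
      sigma_mul_good s5 s6 s7 (hf a (mem_insert_self a s))
        (good_prod hστ hhtp hhτ hdA1 hdB1 hτd s1 s2 s3 s4 s8
          (fun i hi => hf i (mem_insert_of_mem hi))),
      ih (fun i hi => hf i (mem_insert_of_mem hi))]

end GoodSection


section MainSection
variable {K A B : Type*} [Field K]
    [CommRing A] [Algebra K A] [CommRing B] [Algebra K B]

/-- signed factorial coefficient of cumulants -/
def zc (k : ℕ) : ℤ := (-1) ^ (k - 1) * ((k - 1).factorial : ℤ)

lemma zc_one : zc 1 = 1 := by simp [zc]

lemma zc_rec (q : ℕ) : zc (q + 2) + ((q + 1 : ℕ) : ℤ) * zc (q + 1) = 0 := by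
  simp only [zc, Nat.succ_sub_one]
  rw [Nat.factorial_succ, pow_succ]
  push_cast
  ring

variable {n : ℕ} (τ : B →ₗ[K] A) (x : Fin n → B)

/-- moments -/
noncomputable def mom (V : Finset (Fin n)) : A := τ (∏ i ∈ V, x i)

/-- set-indexed cumulants -/
noncomputable def kap (V : Finset (Fin n)) : A :=
  ∑ P ∈ parts V, zc P.card • ∏ J ∈ P, mom τ x J

lemma kap_singleton (e : Fin n) : kap τ x {e} = mom τ x {e} := by
  rw [kap, parts_singleton, Finset.sum_singleton]
  simp [zc_one]

variable {σ : A →ₗ[K] B} {h dA : A →ₗ[K] A} {dB : B →ₗ[K] B}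

lemma good_kap (hστ : ∀ x, σ (τ x) = x)
    (hhtp : ∀ a, h (dA a) + dA (h a) = τ (σ a) - a) (hhτ : ∀ x, h (τ x) = 0)
    (hdA1 : dA 1 = 0) (hdB1 : dB 1 = 0) (hτd : ∀ x, τ (dB x) = dA (τ x))
    (s1 : ∀ a b : A, h (h a * h b) = 0) (s2 : ∀ (a : A) (x : B), h (h a * τ x) = 0)
    (s3 : ∀ x y : B, h (τ x * τ y) = 0) (s4 : h 1 = 0) (s8 : σ 1 = 1)
    (V : Finset (Fin n)) : IsGood σ τ h (kap τ x V) := by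
  refine isGood_sum (fun P hP => isGood_zsmul ?_ _)
  exact good_prod hστ hhtp hhτ hdA1 hdB1 hτd s1 s2 s3 s4 s8
    (fun J hJ => isGood_tau hστ hhτ _)

lemma kap_rec (e : Fin n) (V : Finset (Fin n)) (he : e ∈ V) :
    ∑ G ∈ V.powerset.filter (fun G => e ∈ G),
      kap τ x G * (if V \ G = ∅ then 1 else mom τ x (V \ G)) = mom τ x V := by
  classical
  set m' : Finset (Fin n) → A := fun U => if U = ∅ then 1 else mom τ x U with hm'
  set g : (Σ _ : Finset (Finset (Fin n)), Finset (Fin n)) → A := fun q =>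
    zc (q.1.filter (fun s => s ⊆ q.2)).card •
      ((∏ J ∈ q.1.filter (fun s => s ⊆ q.2), mom τ x J) * m' (V \ q.2)) with hg
  have hnotsub : ∀ {G : Finset (Fin n)}, G ⊆ V → G ≠ V → ¬ (V \ G ⊆ G) := by
    intro G hsub hne hss
    have hnon : (V \ G).Nonempty := by
      rw [Finset.sdiff_nonempty]
      intro hsub'
      exact hne (subset_antisymm hsub hsub')
    obtain ⟨a, ha⟩ := hnon
    exact (mem_sdiff.1 ha).2 (hss ha)
  have hfilkey : ∀ {G : Finset (Fin n)} {Q : Finset (Finset (Fin n))},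
      G ⊆ V → Q ∈ parts G →
      (if G = V then Q else insert (V \ G) Q).filter (fun s => s ⊆ G) = Q := by
    intro G Q hsub hQ
    by_cases hGV : G = V
    · rw [if_pos hGV, filter_subset_self_parts hQ]
    · rw [if_neg hGV, Finset.filter_insert, if_neg (hnotsub hsub hGV),
        filter_subset_self_parts hQ]
  calc
    ∑ G ∈ V.powerset.filter (fun G => e ∈ G), kap τ x G * m' (V \ G)
      = ∑ G ∈ V.powerset.filter (fun G => e ∈ G), ∑ Q ∈ parts G,
          zc Q.card • ((∏ J ∈ Q, mom τ x J) * m' (V \ G)) := by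
        refine Finset.sum_congr rfl (fun G _ => ?_)
        rw [kap, Finset.sum_mul]
        exact Finset.sum_congr rfl (fun Q _ => smul_mul_assoc _ _ _)
    _ = ∑ p ∈ (V.powerset.filter (fun G => e ∈ G)).sigma (fun G => parts G),
          zc p.2.card • ((∏ J ∈ p.2, mom τ x J) * m' (V \ p.1)) :=
        Finset.sum_sigma' _ _ _
    _ = ∑ q ∈ (parts V).sigma (fun P =>
            insert V ((P.filter (fun s => e ∉ s)).image (fun Bl => V \ Bl))), g q := by
      refine Finset.sum_nbij'
        (fun p => ⟨if p.1 = V then p.2 else insert (V \ p.1) p.2, p.1⟩)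
        (fun q => ⟨q.2, q.1.filter (fun s => s ⊆ q.2)⟩) ?_ ?_ ?_ ?_ ?_
      · rintro ⟨G, Q⟩ hp
        obtain ⟨hG, hQ⟩ := Finset.mem_sigma.1 hp
        simp only [mem_filter, mem_powerset] at hG
        dsimp only at hQ ⊢
        refine Finset.mem_sigma.2 ⟨?_, ?_⟩
        · by_cases hGV : G = V
          · rw [if_pos hGV]
            rw [hGV] at hQ
            exact hQ
          · rw [if_neg hGV]
            exact (insert_sdiff_parts hG.1 hGV hQ).1
        · by_cases hGV : G = V
          · rw [if_pos hGV, hGV]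
            exact mem_insert_self _ _
          · rw [if_neg hGV]
            refine mem_insert_of_mem (Finset.mem_image.2 ⟨V \ G, ?_, ?_⟩)
            · refine mem_filter.2 ⟨mem_insert_self _ _, by simp [hG.2]⟩
            · exact Finset.sdiff_sdiff_eq_self hG.1
      · rintro ⟨P, G⟩ hq
        obtain ⟨hP, hG⟩ := Finset.mem_sigma.1 hq
        dsimp only at hP hG ⊢
        refine Finset.mem_sigma.2 ⟨?_, ?_⟩
        · rcases mem_insert.1 hG with hGV | hGim
          · simp only [mem_filter, mem_powerset, hGV]
            exact ⟨subset_rfl, he⟩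
          · obtain ⟨Bl, hBl', hBlq⟩ := Finset.mem_image.1 hGim
            obtain ⟨hBl, heBl⟩ := mem_filter.1 hBl'
            simp only [mem_filter, mem_powerset, ← hBlq]
            exact ⟨Finset.sdiff_subset, mem_sdiff.2 ⟨he, heBl⟩⟩
        · dsimp only
          rcases mem_insert.1 hG with hGV | hGim
          · rw [hGV, filter_subset_self_parts hP]
            exact hP
          · obtain ⟨Bl, hBl', hBlq⟩ := Finset.mem_image.1 hGim
            obtain ⟨hBl, heBl⟩ := mem_filter.1 hBl'
            rw [← hBlq, filter_subset_sdiff_parts hP hBl]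
            exact parts_erase hP hBl
      · rintro ⟨G, Q⟩ hp
        obtain ⟨hG, hQ⟩ := Finset.mem_sigma.1 hp
        simp only [mem_filter, mem_powerset] at hG
        dsimp only at hQ ⊢
        rw [hfilkey hG.1 hQ]
      · rintro ⟨P, G⟩ hq
        obtain ⟨hP, hG⟩ := Finset.mem_sigma.1 hq
        dsimp only at hP hG ⊢
        rcases mem_insert.1 hG with hGV | hGim
        · rw [hGV, if_pos rfl, filter_subset_self_parts hP]
        · obtain ⟨Bl, hBl', hBlq⟩ := Finset.mem_image.1 hGim
          obtain ⟨hBl, heBl⟩ := mem_filter.1 hBl'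
          have hGV : G ≠ V := by rw [← hBlq]; exact sdiff_ne_self_of_mem hP hBl
          rw [if_neg hGV, ← hBlq, filter_subset_sdiff_parts hP hBl,
            Finset.sdiff_sdiff_eq_self (block_subset hP hBl), Finset.insert_erase hBl]
      · rintro ⟨G, Q⟩ hp
        obtain ⟨hG, hQ⟩ := Finset.mem_sigma.1 hp
        simp only [mem_filter, mem_powerset] at hG
        dsimp only at hQ ⊢
        rw [hg]
        dsimp only
        rw [hfilkey hG.1 hQ]
    _ = ∑ P ∈ parts V, ∑ G ∈ insert V ((P.filter (fun s => e ∉ s)).image (fun Bl => V \ Bl)),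
          g ⟨P, G⟩ := Finset.sum_sigma _ _ _
    _ = mom τ x V := by
      have hinner : ∀ P ∈ parts V,
          (∑ G ∈ insert V ((P.filter (fun s => e ∉ s)).image (fun Bl => V \ Bl)), g ⟨P, G⟩) =
          (zc P.card + ((P.card - 1 : ℕ) : ℤ) * zc (P.card - 1)) • ∏ J ∈ P, mom τ x J := by
        intro P hP
        rw [Finset.sum_insert (top_not_mem_image hP)]
        have hterm1 : g ⟨P, V⟩ = zc P.card • ∏ J ∈ P, mom τ x J := by
          rw [hg]
          dsimp only
          rw [filter_subset_self_parts hP, Finset.sdiff_self]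
          simp [hm']
        have hterm2 : ∀ Bl ∈ P.filter (fun s => e ∉ s),
            g ⟨P, V \ Bl⟩ = zc (P.card - 1) • ∏ J ∈ P, mom τ x J := by
          intro Bl hBl'
          obtain ⟨hBl, -⟩ := mem_filter.1 hBl'
          have hBlne : Bl ≠ ∅ := by
            obtain ⟨a, ha⟩ := (mem_parts.1 hP).1 Bl hBl
            exact fun hq => by simp [hq] at ha
          rw [hg]
          dsimp only
          rw [filter_subset_sdiff_parts hP hBl,
            Finset.sdiff_sdiff_eq_self (block_subset hP hBl),
            Finset.card_erase_of_mem hBl]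
          have hmb : m' Bl = mom τ x Bl := by simp [hm', hBlne]
          rw [hmb, mul_comm, Finset.mul_prod_erase P _ hBl]
        have himg : ∑ G ∈ (P.filter (fun s => e ∉ s)).image (fun Bl => V \ Bl), g ⟨P, G⟩ =
            ∑ _Bl ∈ P.filter (fun s => e ∉ s), zc (P.card - 1) • ∏ J ∈ P, mom τ x J := by
          rw [Finset.sum_image ?hinj]
          · exact Finset.sum_congr rfl hterm2
          case hinj =>
            intro b1 hb1 b2 hb2 hq
            have h1 := Finset.sdiff_sdiff_eq_self (block_subset hP (mem_filter.1 hb1).1)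
            have h2 := Finset.sdiff_sdiff_eq_self (block_subset hP (mem_filter.1 hb2).1)
            rw [← h1, ← h2, show V \ b1 = V \ b2 from hq]
        rw [hterm1, himg, Finset.sum_const, card_filter_not_mem hP he, add_smul]
        congr 1
        rw [← Nat.cast_smul_eq_nsmul ℤ, smul_smul]
      rw [Finset.sum_congr rfl hinner]
      rw [Finset.sum_eq_single_of_mem {V} (mem_parts_self ⟨e, he⟩)]
      · simp [zc_one, mom]
      · intro P hP hne
        have hcard : 2 ≤ P.card := by
          by_contra hlt
          exact hne (card_one_of_mem_parts hP ⟨e, he⟩ (by omega))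
        obtain ⟨q, hq⟩ : ∃ q, P.card = q + 2 := ⟨P.card - 2, by omega⟩
        have h1 : q + 2 - 1 = q + 1 := by omega
        rw [hq, h1, zc_rec q, zero_smul]


lemma kap_sum_parts_aux (m : ℕ) : ∀ V : Finset (Fin n), V.card ≤ m → V.Nonempty →
    ∑ S ∈ parts V, ∏ J ∈ S, kap τ x J = mom τ x V := by
  induction m with
  | zero =>
    intro V hc hne
    have := Finset.card_pos.2 hne
    omega
  | succ m ih =>
    intro V hc hne
    obtain ⟨e, he⟩ := hne
    rw [sum_parts_split he (fun P => ∏ J ∈ P, kap τ x J)]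
    have hstep : ∀ G ∈ V.powerset.filter (fun G => e ∈ G),
        (∑ R ∈ parts (V \ G), ∏ J ∈ insert G R, kap τ x J) =
        kap τ x G * (if V \ G = ∅ then 1 else mom τ x (V \ G)) := by
      intro G hG
      simp only [mem_filter, mem_powerset] at hG
      have hGnR : ∀ R ∈ parts (V \ G), G ∉ R := by
        intro R hR hGR
        have hsub : G ⊆ V \ G := block_subset hR hGR
        exact (mem_sdiff.1 (hsub hG.2)).2 hG.2
      have h1 : ∀ R ∈ parts (V \ G), ∏ J ∈ insert G R, kap τ x J
          = kap τ x G * ∏ J ∈ R, kap τ x J := fun R hR => Finset.prod_insert (hGnR R hR)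
      rw [Finset.sum_congr rfl h1, ← Finset.mul_sum]
      congr 1
      by_cases hVG : V \ G = ∅
      · rw [if_pos hVG, hVG, parts_empty]
        simp
      · rw [if_neg hVG]
        have hVGne : (V \ G).Nonempty := Finset.nonempty_of_ne_empty hVG
        have hGne : G.Nonempty := ⟨e, hG.2⟩
        have hcard : (V \ G).card ≤ m := by
          have h1' : (V \ G).card = V.card - G.card := Finset.card_sdiff_of_subset hG.1
          have h2' : 1 ≤ G.card := Finset.card_pos.2 hGne
          have h3' : G.card ≤ V.card := Finset.card_le_card hG.1
          omega
        exact ih (V \ G) hcard hVGne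
    rw [Finset.sum_congr rfl hstep]
    exact kap_rec τ x e V he

lemma kap_sum_parts (V : Finset (Fin n)) (hne : V.Nonempty) :
    ∑ S ∈ parts V, ∏ J ∈ S, kap τ x J = mom τ x V :=
  kap_sum_parts_aux τ x V.card V le_rfl hne

lemma sigma_kap (hστ : ∀ x, σ (τ x) = x)
    (hhtp : ∀ a, h (dA a) + dA (h a) = τ (σ a) - a) (hhτ : ∀ x, h (τ x) = 0)
    (hdA1 : dA 1 = 0) (hdB1 : dB 1 = 0) (hτd : ∀ x, τ (dB x) = dA (τ x))
    (s1 : ∀ a b : A, h (h a * h b) = 0) (s2 : ∀ (a : A) (x : B), h (h a * τ x) = 0)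
    (s3 : ∀ x y : B, h (τ x * τ y) = 0) (s4 : h 1 = 0)
    (s5 : ∀ a b : A, σ (h a * h b) = 0) (s6 : ∀ (a : A) (x : B), σ (h a * τ x) = 0)
    (s7 : ∀ x y : B, σ (τ x * τ y) = x * y) (s8 : σ 1 = 1) (m : ℕ) :
    ∀ V : Finset (Fin n), V.card ≤ m → V.Nonempty →
    σ (kap τ x V) = if V.card = 1 then ∏ i ∈ V, x i else 0 := by
  have hgoodk := good_kap τ x hστ hhtp hhτ hdA1 hdB1 hτd s1 s2 s3 s4 s8
  induction m with
  | zero =>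
    intro V hc hne
    have := Finset.card_pos.2 hne
    omega
  | succ m ih =>
    intro V hc hne
    by_cases h1 : V.card = 1
    · rw [if_pos h1]
      obtain ⟨e, rfl⟩ := Finset.card_eq_one.1 h1
      rw [kap_singleton, mom, hστ]
    · rw [if_neg h1]
      have hc2 : 2 ≤ V.card := by
        have := Finset.card_pos.2 hne
        omega
      have hB := kap_sum_parts τ x V hne
      have hL : σ (∑ S ∈ parts V, ∏ J ∈ S, kap τ x J) =
          ∑ S ∈ parts V, ∏ J ∈ S, σ (kap τ x J) := by
        rw [map_sum]
        exact Finset.sum_congr rfl (fun S hS =>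
          sigma_prod_good hστ hhtp hhτ hdA1 hdB1 hτd s1 s2 s3 s4 s5 s6 s7 s8
            (fun J _ => hgoodk J))
      have hsum : ∑ S ∈ parts V, ∏ J ∈ S, σ (kap τ x J) =
          σ (kap τ x V) + ∏ i ∈ V, x i := by
        rw [← Finset.add_sum_erase (parts V) _ (mem_parts_self hne)]
        congr 1
        · rw [Finset.prod_singleton]
        · set S0 := V.image (fun i => ({i} : Finset (Fin n))) with hS0
          have hS0parts : S0 ∈ parts V := by
            refine mem_parts.2 ⟨?_, ?_, ?_⟩
            · rintro s hs
              obtain ⟨i, hi, rfl⟩ := Finset.mem_image.1 hs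
              exact ⟨i, mem_singleton_self i⟩
            · rintro s hs t ht hne'
              obtain ⟨i, hi, rfl⟩ := Finset.mem_image.1 hs
              obtain ⟨j, hj, rfl⟩ := Finset.mem_image.1 ht
              have : i ≠ j := fun hq => hne' (by rw [hq])
              ext a
              simp only [mem_inter, mem_singleton, Finset.notMem_empty, iff_false, not_and]
              rintro rfl rfl
              exact this rfl
            · ext a
              simp only [Finset.mem_sup, id_eq]
              constructor
              · rintro ⟨s, hs, has⟩
                obtain ⟨i, hi, rfl⟩ := Finset.mem_image.1 hs
                rw [mem_singleton.1 has]
                exact hi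
              · intro ha
                exact ⟨{a}, Finset.mem_image_of_mem _ ha, mem_singleton_self a⟩
          have hS0card : S0.card = V.card := by
            rw [hS0]
            exact Finset.card_image_of_injective V
              (fun i j hq => by simpa using hq)
          have hS0ne : S0 ≠ {V} := by
            intro hq
            have : S0.card = 1 := by rw [hq]; simp
            omega
          rw [Finset.sum_eq_single_of_mem S0 (Finset.mem_erase.2 ⟨hS0ne, hS0parts⟩)]
          · rw [hS0, Finset.prod_image (fun i _ j _ hq => by simpa using hq)]
            refine Finset.prod_congr rfl (fun i hi => ?_)
            rw [kap_singleton, mom, hστ, Finset.prod_singleton]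
          · intro S hS hSne
            obtain ⟨hSneV, hSparts⟩ := Finset.mem_erase.1 hS
            have hexists : ∃ J ∈ S, 2 ≤ J.card := by
              by_contra hno
              push_neg at hno
              apply hSne
              ext J
              constructor
              · intro hJ
                have hJpos := Finset.card_pos.2 ((mem_parts.1 hSparts).1 J hJ)
                have hJc : J.card = 1 := by
                  have := hno J hJ
                  omega
                obtain ⟨a, rfl⟩ := Finset.card_eq_one.1 hJc
                rw [hS0]
                exact Finset.mem_image_of_mem _
                  (block_subset hSparts hJ (mem_singleton_self a))
              · intro hJ
                rw [hS0] at hJ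
                obtain ⟨i, hi, rfl⟩ := Finset.mem_image.1 hJ
                obtain ⟨s, hsS, his⟩ := exists_block hSparts hi
                have hspos := Finset.card_pos.2 ((mem_parts.1 hSparts).1 s hsS)
                have hsc : s.card = 1 := by
                  have := hno s hsS
                  omega
                obtain ⟨a, rfl⟩ := Finset.card_eq_one.1 hsc
                rw [← mem_singleton.1 his] at hsS
                exact hsS
            obtain ⟨J, hJS, hJ2⟩ := hexists
            refine Finset.prod_eq_zero hJS ?_
            have hJV : J ≠ V := by
              intro hq
              exact hSneV (eq_self_of_mem_parts hSparts (hq ▸ hJS))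
            have hJsub : J ⊆ V := block_subset hSparts hJS
            have hJlt : J.card ≤ m := by
              have := Finset.card_lt_card (ssubset_of_subset_of_ne hJsub hJV)
              omega
            have hJne : J.Nonempty := Finset.card_pos.1 (by omega)
            rw [ih J hJlt hJne, if_neg (by omega)]
      have hfin : σ (kap τ x V) + ∏ i ∈ V, x i = ∏ i ∈ V, x i := by
        rw [← hsum, ← hL, hB, mom, hστ]
      exact add_eq_right.1 hfin


lemma partitionsOf_eq : partitionsOf n = parts (Finset.univ : Finset (Fin n)) := by
  ext P
  simp only [partitionsOf, parts, Finset.mem_filter]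

lemma cumul_eq_kap_univ : cumul (⇑τ) n x = kap τ x Finset.univ := by
  rw [cumul, kap, partitionsOf_eq]
  exact Finset.sum_congr rfl (fun P _ => by rw [zc]; rfl)

lemma cumul_eq_kap (J : Finset (Fin n)) :
    cumul (⇑τ) J.card (restr x J) = kap τ x J := by
  classical
  set φ : Fin J.card → Fin n := fun i => (J.equivFin.symm i).1 with hφdef
  have hφ : Function.Injective φ :=
    fun i j hq => J.equivFin.symm.injective (Subtype.coe_injective hq)
  have himg : (Finset.univ : Finset (Fin J.card)).image φ = J := univ_image_equivFin J
  have hkap := sum_parts_image hφ (Finset.univ : Finset (Fin J.card))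
    (fun P' => zc P'.card • ∏ J' ∈ P', mom τ x J')
  rw [himg] at hkap
  rw [cumul, partitionsOf_eq, kap, hkap]
  refine Finset.sum_congr rfl (fun P hP => ?_)
  have hinj2 : Function.Injective (fun s : Finset (Fin J.card) => s.image φ) :=
    Finset.image_injective hφ
  rw [Finset.card_image_of_injective P hinj2]
  rw [Finset.prod_image (fun s (hs : s ∈ P) t (ht : t ∈ P) hq => hinj2 hq)]
  rw [zc]
  refine congrArg₂ _ rfl ?_
  refine Finset.prod_congr rfl (fun s hs => ?_)
  rw [mom, Finset.prod_image (fun i _ j _ hq => hφ hq)]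
  rfl

lemma koszul_eq (dA' : A →ₗ[K] A) (P : Finset (Finset (Fin n))) :
    koszul (⇑dA') P.card (fun j => cumul (⇑τ) ((P.equivFin.symm j).1.card)
        (restr x (P.equivFin.symm j).1)) =
      ∑ S ∈ P.powerset.filter (fun S => S.Nonempty),
        (-1 : ℤ) ^ (P.card - S.card) •
          (dA' (∏ J ∈ S, kap τ x J) * ∏ J ∈ P \ S, kap τ x J) := by
  classical
  set ψ : Fin P.card → Finset (Fin n) := fun j => (P.equivFin.symm j).1 with hψdef
  have hψinj : Function.Injective ψ :=
    fun i j hq => P.equivFin.symm.injective (Subtype.coe_injective hq)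
  have himg : (Finset.univ : Finset (Fin P.card)).image ψ = P := univ_image_equivFin P
  have hsum := sum_powerset_ne_image hψinj (Finset.univ : Finset (Fin P.card))
    (fun S => (-1 : ℤ) ^ (P.card - S.card) •
      (dA' (∏ J ∈ S, kap τ x J) * ∏ J ∈ P \ S, kap τ x J))
  rw [himg] at hsum
  rw [koszul]
  refine Eq.trans (Finset.sum_congr rfl (fun s hs => ?_)) hsum.symm
  have hcard : (s.image ψ).card = s.card := Finset.card_image_of_injective s hψinj
  have hcompl : P \ s.image ψ = sᶜ.image ψ := by
    rw [Finset.compl_eq_univ_sdiff, Finset.image_sdiff _ _ hψinj, himg]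
  have hterm : ∀ i : Fin P.card, cumul (⇑τ) ((P.equivFin.symm i).1.card)
      (restr x (P.equivFin.symm i).1) = kap τ x (ψ i) := fun i => cumul_eq_kap τ x (ψ i)
  simp_rw [hterm]
  rw [hcard, hcompl]
  rw [Finset.prod_image (fun (i : Fin P.card) (_ : i ∈ s) j _ hq => hψinj hq)]
  rw [Finset.prod_image (fun (i : Fin P.card) (_ : i ∈ sᶜ) j _ hq => hψinj hq)]

end MainSection

/-- for a semifull algebra contraction `(σ,τ,h)` of `(A,d_A)` onto `(B,d_B)`,
the cumulants of `τ` satisfy, for `n ≥ 2`: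
`κ(τ)_n(x_1,…,x_n) = Σ_{partitions into k ≥ 2 blocks} h(K(d_A)_k(κ(τ)_{|I_1|}(…),…,κ(τ)_{|I_k|}(…)))`. -/
theorem semifull_transfer_cumulants (K A B : Type*) [Field K] [CharZero K]
    [CommRing A] [Algebra K A] [CommRing B] [Algebra K B]
    (dA : A →ₗ[K] A) (dB : B →ₗ[K] B) (σ : A →ₗ[K] B) (τ : B →ₗ[K] A) (h : A →ₗ[K] A)
    (hdA2 : ∀ a, dA (dA a) = 0) (hdB2 : ∀ x, dB (dB x) = 0)
    (hσd : ∀ a, σ (dA a) = dB (σ a)) (hτd : ∀ x, τ (dB x) = dA (τ x))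
    (hστ : ∀ x, σ (τ x) = x)
    (hhtp : ∀ a, h (dA a) + dA (h a) = τ (σ a) - a)
    (hσh : ∀ a, σ (h a) = 0) (hhτ : ∀ x, h (τ x) = 0) (hhh : ∀ a, h (h a) = 0)
    (hdA1 : dA 1 = 0) (hdB1 : dB 1 = 0)
    (s1 : ∀ a b : A, h (h a * h b) = 0) (s2 : ∀ (a : A) (x : B), h (h a * τ x) = 0)
    (s3 : ∀ x y : B, h (τ x * τ y) = 0) (s4 : h 1 = 0)
    (s5 : ∀ a b : A, σ (h a * h b) = 0) (s6 : ∀ (a : A) (x : B), σ (h a * τ x) = 0)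
    (s7 : ∀ x y : B, σ (τ x * τ y) = x * y) (s8 : σ 1 = 1) :
    ∀ (n : ℕ), 2 ≤ n → ∀ x : Fin n → B,
      cumul (⇑τ) n x =
        ∑ P ∈ (partitionsOf n).filter fun P => 2 ≤ P.card,
          h (koszul (⇑dA) P.card fun j =>
            cumul (⇑τ) ((P.equivFin.symm j).1.card) (restr x (P.equivFin.symm j).1)) := by
  intro n hn x
  classical
  have hne0 : 0 < n := by omega
  have huniv_ne : (Finset.univ : Finset (Fin n)).Nonempty := ⟨⟨0, hne0⟩, mem_univ _⟩
  have hcard_univ : (Finset.univ : Finset (Fin n)).card = n := by simp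
  have hgoodk : ∀ W : Finset (Fin n), IsGood σ τ h (kap τ x W) :=
    good_kap τ x hστ hhtp hhτ hdA1 hdB1 hτd s1 s2 s3 s4 s8
  have hκσ : σ (kap τ x Finset.univ) = 0 := by
    have hs := sigma_kap τ x hστ hhtp hhτ hdA1 hdB1 hτd s1 s2 s3 s4 s5 s6 s7 s8
      (Finset.univ : Finset (Fin n)).card Finset.univ le_rfl huniv_ne
    rw [hs, if_neg (by rw [hcard_univ]; omega)]
  have hκh : h (kap τ x Finset.univ) = 0 := (hgoodk Finset.univ).1
  have hhdA : h (dA (kap τ x Finset.univ)) = - kap τ x Finset.univ := by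
    have h2 := hhtp (kap τ x Finset.univ)
    rw [hκh, map_zero, add_zero, hκσ, map_zero, zero_sub] at h2
    exact h2
  set F : Finset (Finset (Fin n)) → A := fun P =>
    ∑ S ∈ P.powerset.filter (fun S => S.Nonempty),
      (-1 : ℤ) ^ ((P \ S).card) •
        h (dA (∏ J ∈ S, kap τ x J) * ∏ J ∈ P \ S, kap τ x J) with hF
  have hRHS : ∀ P ∈ (parts (Finset.univ : Finset (Fin n))).filter (fun P => 2 ≤ P.card),
      h (koszul (⇑dA) P.card fun j => cumul (⇑τ) ((P.equivFin.symm j).1.card)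
        (restr x (P.equivFin.symm j).1)) = F P := by
    intro P hP
    rw [koszul_eq τ x dA P, map_sum, hF]
    dsimp only
    refine Finset.sum_congr rfl (fun S hS => ?_)
    simp only [mem_filter, mem_powerset] at hS
    rw [map_zsmul, Finset.card_sdiff_of_subset hS.1]
  have hTot : ∑ P ∈ parts (Finset.univ : Finset (Fin n)), F P = 0 := by
    rw [hF]
    dsimp only
    rw [sum_parts_pair (Finset.univ : Finset (Fin n)) (fun S R =>
      (-1 : ℤ) ^ R.card • h (dA (∏ J ∈ S, kap τ x J) * ∏ J ∈ R, kap τ x J))]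
    refine Finset.sum_eq_zero (fun V hV => ?_)
    simp only [mem_filter, mem_powerset] at hV
    rw [Finset.sum_comm]
    refine Finset.sum_eq_zero (fun R hR => ?_)
    have hkey : ∑ S ∈ parts V, h (dA (∏ J ∈ S, kap τ x J) * ∏ J ∈ R, kap τ x J) = 0 := by
      have h1 : ∑ S ∈ parts V, dA (∏ J ∈ S, kap τ x J) * ∏ J ∈ R, kap τ x J =
          dA (mom τ x V) * ∏ J ∈ R, kap τ x J := by
        rw [← Finset.sum_mul, ← map_sum, kap_sum_parts τ x V hV.2]
      rw [← map_sum, h1, mom, ← hτd]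
      exact h_mul_good s1 s2 s3 (isGood_tau hστ hhτ _)
        (good_prod hστ hhtp hhτ hdA1 hdB1 hτd s1 s2 s3 s4 s8 (fun J _ => hgoodk J))
    rw [← Finset.smul_sum, hkey, smul_zero]
  have hnot : (parts (Finset.univ : Finset (Fin n))).filter (fun P => ¬ 2 ≤ P.card) =
      {{Finset.univ}} := by
    ext P
    simp only [mem_filter, mem_singleton]
    constructor
    · rintro ⟨hP, hc⟩
      exact card_one_of_mem_parts hP huniv_ne (by omega)
    · rintro rfl
      exact ⟨mem_parts_self huniv_ne, by simp⟩
  have hpw : ((({Finset.univ} : Finset (Finset (Fin n)))).powerset.filter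
      (fun S => S.Nonempty)) = {{Finset.univ}} := by
    ext S
    simp only [mem_filter, mem_powerset, mem_singleton]
    constructor
    · rintro ⟨hsub, hne⟩
      rcases Finset.subset_singleton_iff.1 hsub with hS | hS
      · subst hS
        exact absurd hne (by simp)
      · exact hS
    · rintro rfl
      exact ⟨subset_rfl, ⟨Finset.univ, mem_singleton_self _⟩⟩
  have hFtop : F {Finset.univ} = - kap τ x Finset.univ := by
    rw [hF]
    dsimp only
    rw [hpw, Finset.sum_singleton, Finset.sdiff_self]
    simp only [Finset.card_empty, pow_zero, one_smul, Finset.prod_empty, mul_one,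
      Finset.prod_singleton]
    exact hhdA
  have hsplit := Finset.sum_filter_add_sum_filter_not
    (parts (Finset.univ : Finset (Fin n))) (fun P => 2 ≤ P.card) F
  rw [hTot, hnot, Finset.sum_singleton, hFtop] at hsplit
  have hmain : ∑ P ∈ (parts (Finset.univ : Finset (Fin n))).filter (fun P => 2 ≤ P.card), F P =
      kap τ x Finset.univ := add_neg_eq_zero.1 hsplit
  rw [cumul_eq_kap_univ τ x, partitionsOf_eq, Finset.sum_congr rfl hRHS]
  exact hmain.symm
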